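/- The bound |γ₂| ≤ 1/2 on the class ℱ is sharp: the function f analytic on 𝔻 determined by f(0) = 0 and z f'(z) = g(z)·P(z), where g(z) = z/(1 − z²) and P(z) = (1 + z²)/(1 − z²), belongs to ℱ and satisfies |γ₂| = 1/2. -/

import Mathlib

open Complex Metric
open scoped Topology

/-- The `n`-th logarithmic coefficient `γₙ` of `f`, computed from an analytic branch `h`
of `log (f z / z)` with `h 0 = 0`: it is half the `n`-th Taylor coefficient of `h` at `0`. -/
noncomputable def logCoeff (h : ℂ → ℂ) (n : ℕ) : ℂ :=
  iteratedDeriv n h 0 / (2 * (n.factorial : ℂ))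

/-- `g` is an odd starlike function on the unit disk. -/
def IsOddStarlike (g : ℂ → ℂ) : Prop :=
  AnalyticOnNhd ℂ g (ball (0:ℂ) 1) ∧ g 0 = 0 ∧ deriv g 0 = 1 ∧
    (∀ z ∈ ball (0:ℂ) 1, z ≠ 0 → 0 < (z * deriv g z / g z).re) ∧
    (∀ z ∈ ball (0:ℂ) 1, g (-z) = -g z)

/-- `f` belongs to the class ℱ of close-to-convex functions with argument `0`
with respect to odd starlike functions. -/
def MemClassF (f : ℂ → ℂ) : Prop :=
  AnalyticOnNhd ℂ f (ball (0:ℂ) 1) ∧ f 0 = 0 ∧ deriv f 0 = 1 ∧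
    ∃ g : ℂ → ℂ, IsOddStarlike g ∧
      ∀ z ∈ ball (0:ℂ) 1, z ≠ 0 → 0 < (z * deriv f z / g z).re

/-- `h` is an analytic branch of `log (f z / z)` on the unit disk with `h 0 = 0`. -/
def IsLogBranch (f h : ℂ → ℂ) : Prop :=
  AnalyticOnNhd ℂ h (ball (0:ℂ) 1) ∧ h 0 = 0 ∧
    ∀ z ∈ ball (0:ℂ) 1, z ≠ 0 → Complex.exp (h z) = f z / z

lemma denom_ne_zero' {z : ℂ} (hz : z ∈ ball (0:ℂ) 1) : (1 : ℂ) - z ^ 2 ≠ 0 := by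
  intro h
  have h1 : z ^ 2 = 1 := by linear_combination -h
  have h2 : ‖z‖ < 1 := by simpa using mem_ball_zero_iff.mp hz
  have h3 : ‖z ^ 2‖ = 1 := by rw [h1]; simp
  rw [norm_pow] at h3
  nlinarith [norm_nonneg z]

lemma re_pos_aux {w : ℂ} (hw : ‖w‖ < 1) : 0 < ((1 + w) / (1 - w)).re := by
  have hns : Complex.normSq w < 1 := by
    rw [← Complex.sq_norm]; nlinarith [norm_nonneg w]
  have hne : (1 : ℂ) - w ≠ 0 := by
    intro h
    have hw1 : w = 1 := by linear_combination -h
    rw [hw1] at hns; simp [Complex.normSq] at hns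
  have hd : 0 < Complex.normSq (1 - w) := Complex.normSq_pos.mpr hne
  rw [Complex.div_re, ← add_div]
  apply div_pos _ hd
  rw [Complex.normSq_apply] at hns
  simp only [Complex.add_re, Complex.sub_re, Complex.one_re, Complex.add_im,
    Complex.sub_im, Complex.one_im]
  nlinarith

lemma hasDerivAt_F {z : ℂ} (hz : (1 : ℂ) - z ^ 2 ≠ 0) :
    HasDerivAt (fun z : ℂ => z / (1 - z ^ 2)) ((1 + z ^ 2) / (1 - z ^ 2) ^ 2) z := by
  have h1 : HasDerivAt (fun z : ℂ => (1 : ℂ) - z ^ 2) (-(2 * z)) z := by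
    simpa using (hasDerivAt_pow 2 z).const_sub (1:ℂ)
  have h2 := (hasDerivAt_id z).fun_div h1 hz
  exact h2.congr_deriv (by
    show ((1:ℂ) * (1 - z ^ 2) - z * -(2 * z)) / (1 - z ^ 2) ^ 2 = _
    ring)

/-- Sharpness of `|γ₂| ≤ 1/2` on ℱ: the function `f` with `f 0 = 0` and
`z f'(z) = (z/(1-z²)) · ((1+z²)/(1-z²))` belongs to ℱ and satisfies `|γ₂| = 1/2`. -/
theorem abs_gamma_two_sharp (f : ℂ → ℂ)
    (hf : AnalyticOnNhd ℂ f (ball (0:ℂ) 1)) (hf0 : f 0 = 0)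
    (hode : ∀ z ∈ ball (0:ℂ) 1,
      z * deriv f z = (z / (1 - z ^ 2)) * ((1 + z ^ 2) / (1 - z ^ 2))) :
    MemClassF f ∧ ∀ h : ℂ → ℂ, IsLogBranch f h → ‖logCoeff h 2‖ = 1 / 2 := by
  set F : ℂ → ℂ := fun z => z / (1 - z ^ 2) with hFdef
  set φ : ℂ → ℂ := fun z => (1 + z ^ 2) / (1 - z ^ 2) ^ 2 with hφdef
  have h0mem : (0 : ℂ) ∈ ball (0:ℂ) 1 := mem_ball_self one_pos
  have hden : ∀ z ∈ ball (0:ℂ) 1, (1 : ℂ) - z ^ 2 ≠ 0 := fun z hz => denom_ne_zero' hz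
  -- analyticity of auxiliary functions
  have hden_an : AnalyticOnNhd ℂ (fun z : ℂ => (1:ℂ) - z ^ 2) (ball (0:ℂ) 1) :=
    analyticOnNhd_const.sub (analyticOnNhd_id.pow 2)
  have hFan : AnalyticOnNhd ℂ F (ball (0:ℂ) 1) :=
    analyticOnNhd_id.div hden_an hden
  have hφan : AnalyticOnNhd ℂ φ (ball (0:ℂ) 1) :=
    (analyticOnNhd_const.add (analyticOnNhd_id.pow 2)).div (hden_an.pow 2)
      (fun z hz => pow_ne_zero 2 (hden z hz))
  -- deriv f = φ on the punctured ball
  have hderiv_ne : ∀ z ∈ ball (0:ℂ) 1, z ≠ 0 → deriv f z = φ z := by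
    intro z hz hz0
    have h1 := hode z hz
    have h2 : z * deriv f z = z * φ z := by
      rw [h1, hφdef]; field_simp
    exact mul_left_cancel₀ hz0 h2
  -- identity theorem : deriv f = φ on the whole ball
  have hDf : Set.EqOn (deriv f) φ (ball (0:ℂ) 1) := by
    apply hf.deriv.eqOn_of_preconnected_of_frequently_eq hφan
      (convex_ball (0:ℂ) 1).isPreconnected h0mem
    have hev : ∀ᶠ z in 𝓝[≠] (0:ℂ), deriv f z = φ z := by
      have hball : ∀ᶠ z in 𝓝 (0:ℂ), z ∈ ball (0:ℂ) 1 := isOpen_ball.mem_nhds h0mem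
      filter_upwards [eventually_nhdsWithin_of_eventually_nhds hball,
        self_mem_nhdsWithin] with z hz hz0
      exact hderiv_ne z hz hz0
    exact hev.frequently
  have hdF : ∀ z ∈ ball (0:ℂ) 1, HasDerivAt F (φ z) z := fun z hz => hasDerivAt_F (hden z hz)
  have hderiv0 : deriv f 0 = 1 := by
    have := hDf h0mem
    rw [this, hφdef]; norm_num
  -- f = F on the ball
  have hfF : Set.EqOn f F (ball (0:ℂ) 1) := by
    apply (convex_ball (0:ℂ) 1).eqOn_of_fderivWithin_eq
      (fun z hz => ((hf z hz).differentiableAt).differentiableWithinAt)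
      (fun z hz => (hdF z hz).differentiableAt.differentiableWithinAt)
      isOpen_ball.uniqueDiffOn ?_ h0mem ?_
    · intro z hz
      rw [fderivWithin_of_isOpen isOpen_ball hz, fderivWithin_of_isOpen isOpen_ball hz,
        ← toSpanSingleton_deriv, ← toSpanSingleton_deriv, hDf hz, (hdF z hz).deriv]
    · rw [hf0, hFdef]; simp
  constructor
  · refine ⟨hf, hf0, hderiv0, F, ⟨hFan, by simp [hFdef], ?_, ?_, ?_⟩, ?_⟩
    · have := (hdF 0 h0mem).deriv
      rw [this, hφdef]; norm_num
    · intro z hz hz0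
      have hd := (hdF z hz).deriv
      have hFne : F z ≠ 0 := div_ne_zero hz0 (hden z hz)
      have hne := hden z hz
      have heq : z * deriv F z / F z = (1 + z ^ 2) / (1 - z ^ 2) := by
        have hkey : z * deriv F z = F z * ((1 + z ^ 2) / (1 - z ^ 2)) := by
          rw [hd, hφdef, hFdef]
          field_simp
          try ring
          try exact Or.inl trivial
        rw [hkey, mul_comm (F z), mul_div_assoc, div_self hFne, mul_one]
      rw [heq]
      have : ‖z ^ 2‖ < 1 := by
        rw [norm_pow]
        have h2 : ‖z‖ < 1 := by simpa using mem_ball_zero_iff.mp hz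
        nlinarith [norm_nonneg z]
      exact re_pos_aux this
    · intro z hz
      have hsq : (-z) ^ 2 = z ^ 2 := by ring
      rw [hFdef]
      simp only [hsq, neg_div]
    · intro z hz hz0
      have hFne : F z ≠ 0 := div_ne_zero hz0 (hden z hz)
      have h1 := hode z hz
      have heq : z * deriv f z / F z = (1 + z ^ 2) / (1 - z ^ 2) := by
        rw [h1]
        show F z * ((1 + z ^ 2) / (1 - z ^ 2)) / F z = _
        rw [mul_comm (F z), mul_div_assoc, div_self hFne, mul_one]
      rw [heq]
      have : ‖z ^ 2‖ < 1 := by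
        rw [norm_pow]
        have h2 : ‖z‖ < 1 := by simpa using mem_ball_zero_iff.mp hz
        nlinarith [norm_nonneg z]
      exact re_pos_aux this
  · rintro h ⟨han, h0, hexp⟩
    -- exp (h z) = (1 - z²)⁻¹ on the ball
    have hexp' : ∀ z ∈ ball (0:ℂ) 1, Complex.exp (h z) = ((1:ℂ) - z ^ 2)⁻¹ := by
      intro z hz
      rcases eq_or_ne z 0 with rfl | hz0
      · rw [h0]; simp
      · rw [hexp z hz hz0, hfF hz, hFdef]
        field_simp
    -- deriv h z = 2z/(1-z²) on the ball
    have hdh : ∀ z ∈ ball (0:ℂ) 1, deriv h z = 2 * z / (1 - z ^ 2) := by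
      intro z hz
      have hh : HasDerivAt h (deriv h z) z := (han z hz).differentiableAt.hasDerivAt
      have he : HasDerivAt (fun w => Complex.exp (h w)) (Complex.exp (h z) * deriv h z) z :=
        hh.cexp
      have hpsi : HasDerivAt (fun w : ℂ => ((1:ℂ) - w ^ 2)⁻¹)
          (2 * z / (1 - z ^ 2) ^ 2) z := by
        have h1 : HasDerivAt (fun w : ℂ => (1 : ℂ) - w ^ 2) (-(2 * z)) z := by
          simpa using (hasDerivAt_pow 2 z).const_sub (1:ℂ)
        have := (h1.inv (hden z hz) : HasDerivAt (fun w : ℂ => ((1:ℂ) - w ^ 2)⁻¹) _ z)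
        exact this.congr_deriv (by ring)
      have hcongr : HasDerivAt (fun w : ℂ => ((1:ℂ) - w ^ 2)⁻¹)
          (Complex.exp (h z) * deriv h z) z := by
        apply he.congr_of_eventuallyEq
        filter_upwards [isOpen_ball.mem_nhds hz] with w hw
        exact (hexp' w hw).symm
      have huniq := hcongr.unique hpsi
      rw [hexp' z hz] at huniq
      have hne := hden z hz
      have h3 : deriv h z = (1 - z ^ 2) * ((1 - z ^ 2)⁻¹ * deriv h z) := by
        rw [← mul_assoc, mul_inv_cancel₀ hne, one_mul]
      rw [h3, huniq]
      field_simp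
    -- compute the second iterated derivative
    have h2 : iteratedDeriv 2 h 0 = 2 := by
      rw [iteratedDeriv_succ, iteratedDeriv_one]
      have hEq : deriv h =ᶠ[𝓝 (0:ℂ)] fun z => 2 * z / (1 - z ^ 2) := by
        filter_upwards [isOpen_ball.mem_nhds h0mem] with z hz
        exact hdh z hz
      rw [hEq.deriv_eq]
      have hχ : HasDerivAt (fun z : ℂ => 2 * z / (1 - z ^ 2)) 2 (0:ℂ) := by
        have h1 : HasDerivAt (fun w : ℂ => (1 : ℂ) - w ^ 2) (-(2 * 0)) (0:ℂ) := by
          simpa using (hasDerivAt_pow 2 (0:ℂ)).const_sub (1:ℂ)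
        have h2 : HasDerivAt (fun w : ℂ => 2 * w) 2 (0:ℂ) := by
          simpa using (hasDerivAt_id (0:ℂ)).const_mul (2:ℂ)
        have := h2.fun_div h1 (by norm_num)
        exact this.congr_deriv (by norm_num)
      rw [hχ.deriv]
    rw [logCoeff, h2]
    norm_num
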